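/- Let M be a scheme that is locally of finite type and separated over a field k, let M₀ ⊆ M be an irreducible component with generic point g, and suppose there exists a proper k-scheme S together with a k-morphism φ : S → M whose image contains g. Then M₀, with its reduced closed subscheme structure, is proper over k. -/

import Mathlib

open AlgebraicGeometry CategoryTheory
open CategoryTheory.Limits

/-- Let `M` be a scheme, locally of finite type and separated over a field `k`,
let `M₀ ⊆ M` be an irreducible component with generic point `g`, and suppose there is a proper
`k`-scheme `S` and a `k`-morphism `φ : S → M` whose image contains `g`.  Then `M₀`, with its
reduced closed subscheme structure (i.e. any reduced scheme `Z` with a closed immersion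
`ι : Z → M` whose image is `M₀`), is proper over `k`. -/
theorem irreducible_component_proper_of_dominated_by_proper (k : Type*) [Field k]
    (M S : Scheme) (fM : M ⟶ Spec (CommRingCat.of k)) (fS : S ⟶ Spec (CommRingCat.of k))
    [LocallyOfFiniteType fM] [IsSeparated fM] [IsProper fS]
    (M₀ : Set M) (hM₀ : M₀ ∈ irreducibleComponents M)
    (g : M) (hg : IsGenericPoint g M₀)
    (φ : S ⟶ M) (hφ : φ ≫ fM = fS) (hgφ : g ∈ Set.range φ.base) :
    ∀ (Z : Scheme) (ι : Z ⟶ M), IsClosedImmersion ι → IsReduced Z →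
      Set.range ι.base = M₀ → IsProper (ι ≫ fM) := by
  intro Z ι hι hZred hrange
  -- Step 1: `φ` is universally closed (graph factorization, using separatedness of `fM`).
  have hcomp : UniversallyClosed (φ ≫ fM) := by rw [hφ]; infer_instance
  have hsnd : UniversallyClosed (pullback.snd (φ ≫ fM) fM) :=
    inferInstance
  have hφfact : φ = pullback.lift (𝟙 S) φ (Category.id_comp (φ ≫ fM)) ≫
      pullback.snd (φ ≫ fM) fM := by simp [pullback.lift_snd]
  have hφUC : UniversallyClosed φ := by
    rw [hφfact]
    infer_instance
  -- Step 2: the image of `φ` is closed and contains `g`, hence contains `M₀`.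
  have hclosed : IsClosed (Set.range φ.base) := by
    have := φ.isClosedMap Set.univ isClosed_univ
    rwa [Set.image_univ] at this
  have hM₀sub : M₀ ⊆ Set.range φ.base := by
    rw [← hg.def]
    exact hclosed.closure_subset_iff.mpr (Set.singleton_subset_iff.mpr hgφ)
  -- Step 3: the second projection of the pullback of `φ` and `ι` is surjective onto `Z`.
  have hsurj : Surjective (pullback.snd φ ι) := by
    rw [surjective_iff, ← Set.range_eq_univ, Scheme.Pullback.range_snd]
    rw [← Set.preimage_univ (f := ι.base)]
    apply Set.eq_of_subset_of_subset (Set.preimage_mono (Set.subset_univ _))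
    intro z _
    exact hM₀sub (hrange ▸ Set.mem_range_self z)
  -- Step 4: universal closedness of `ι ≫ fM` by descent along the surjection.
  have hfstCI : IsClosedImmersion (pullback.fst φ ι) :=
    inferInstance
  have hWUC : UniversallyClosed (pullback.snd φ ι ≫ ι ≫ fM) := by
    have : pullback.snd φ ι ≫ ι ≫ fM = pullback.fst φ ι ≫ fS := by
      rw [← hφ, ← Category.assoc, ← Category.assoc, pullback.condition]
    rw [this]
    infer_instance
  have hUC : UniversallyClosed (ι ≫ fM) :=
    @UniversallyClosed.of_comp_surjective _ _ _ (pullback.snd φ ι) (ι ≫ fM) hWUC hsurj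
  -- Step 5: assemble properness.
  have hsep : IsSeparated (ι ≫ fM) := inferInstance
  have hlft : LocallyOfFiniteType (ι ≫ fM) := inferInstance
  exact { toIsSeparated := hsep, toUniversallyClosed := hUC, toLocallyOfFiniteType := hlft }
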